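/- Let (X,d,≤) be a partially ordered metric space with d complete, and let T : X → X be an increasing self-map such that X(T,≤) = {x ∈ X : x ≤ Tx} is nonempty and there exists α ∈ (0,1) with d(Tx,Ty) ≤ α·d(x,y) for all x ≤ y. Suppose that either T is d-continuous or (≤) is d-self-closed, and that for every x,y ∈ X the pair {x,y} has both a lower bound and an upper bound in X. Then T is a strong Picard operator modulo (d,≤): for every x ∈ X the orbit (Tⁿx)ₙ d-converges to a fixed point of T, and T has exactly one fixed point. -/

import Mathlib

open Filter Topology

/-- Ran–Reurings: with the additional hypothesis that every pair has a lower and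
an upper bound, the map is a strong Picard operator modulo (d,≤). -/
theorem stmt1 {X : Type*} [MetricSpace X] [PartialOrder X] [CompleteSpace X]
    (T : X → X)
    (hmono : ∀ x y : X, x ≤ y → T x ≤ T y)
    (hne : ∃ x : X, x ≤ T x)
    (α : ℝ) (hα0 : 0 < α) (hα1 : α < 1)
    (hcontr : ∀ x y : X, x ≤ y → dist (T x) (T y) ≤ α * dist x y)
    (hcc : Continuous T ∨
      (∀ (u : ℕ → X) (x : X), (∀ n m : ℕ, n ≤ m → u n ≤ u m) →
        Tendsto u atTop (𝓝 x) → ∀ n, u n ≤ x))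
    (hbounds : ∀ x y : X, (∃ l : X, l ≤ x ∧ l ≤ y) ∧ (∃ u : X, x ≤ u ∧ y ≤ u)) :
    ∃ z : X, T z = z ∧ (∀ w : X, T w = w → w = z) ∧
      ∀ x : X, Tendsto (fun n => T^[n] x) atTop (𝓝 z) := by
  obtain ⟨x₀, hx₀⟩ := hne
  -- key pair lemma
  have hpair : ∀ a b : X, a ≤ b → ∀ n : ℕ,
      T^[n] a ≤ T^[n] b ∧ dist (T^[n] a) (T^[n] b) ≤ α ^ n * dist a b := by
    intro a b hab n
    induction n with
    | zero =>
      simp only [Function.iterate_zero, id_eq, pow_zero, one_mul]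
      exact ⟨hab, le_refl _⟩
    | succ n ih =>
      rw [Function.iterate_succ_apply', Function.iterate_succ_apply']
      refine ⟨hmono _ _ ih.1, ?_⟩
      calc dist (T (T^[n] a)) (T (T^[n] b)) ≤ α * dist (T^[n] a) (T^[n] b) :=
            hcontr _ _ ih.1
        _ ≤ α * (α ^ n * dist a b) := by
            exact mul_le_mul_of_nonneg_left ih.2 hα0.le
        _ = α ^ (n + 1) * dist a b := by ring
  -- geometric tendsto 0 helper
  have hgeo : ∀ C : ℝ, Tendsto (fun n : ℕ => α ^ n * C) atTop (𝓝 0) := by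
    intro C
    have := (tendsto_pow_atTop_nhds_zero_of_lt_one hα0.le hα1).mul_const C
    simpa using this
  have hmono_orb : ∀ n m : ℕ, n ≤ m → T^[n] x₀ ≤ T^[m] x₀ := by
    have hstep : ∀ n : ℕ, T^[n] x₀ ≤ T^[n + 1] x₀ := by
      intro n
      have h := (hpair x₀ (T x₀) hx₀ n).1
      rwa [← Function.iterate_succ_apply] at h
    exact fun n m h => monotone_nat_of_le_succ hstep h
  have hcauchy : CauchySeq (fun n => T^[n] x₀) := by
    apply cauchySeq_of_le_geometric α (dist x₀ (T x₀)) hα1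
    intro n
    have h := (hpair x₀ (T x₀) hx₀ n).2
    rw [← Function.iterate_succ_apply] at h
    calc dist (T^[n] x₀) (T^[n + 1] x₀) ≤ α ^ n * dist x₀ (T x₀) := h
      _ = dist x₀ (T x₀) * α ^ n := mul_comm _ _
  obtain ⟨z, hz⟩ := cauchySeq_tendsto_of_complete hcauchy
  have hTz : T z = z := by
    rcases hcc with hcont | hsc
    · have h1 : Tendsto (fun n => T^[n + 1] x₀) atTop (𝓝 (T z)) := by
        simpa [Function.iterate_succ_apply', Function.comp_def] using (hcont.tendsto z).comp hz
      have h2 : Tendsto (fun n => T^[n + 1] x₀) atTop (𝓝 z) :=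
        hz.comp (tendsto_add_atTop_nat 1)
      exact tendsto_nhds_unique h1 h2
    · have hub : ∀ n, T^[n] x₀ ≤ z := hsc _ z hmono_orb hz
      have h1 : Tendsto (fun n => T^[n + 1] x₀) atTop (𝓝 (T z)) := by
        rw [tendsto_iff_dist_tendsto_zero]
        apply squeeze_zero (fun n => dist_nonneg)
          (g := fun n => α * dist (T^[n] x₀) z)
        · intro n
          rw [Function.iterate_succ_apply']
          exact hcontr _ _ (hub n)
        · have : Tendsto (fun n => dist (T^[n] x₀) z) atTop (𝓝 0) :=
            tendsto_iff_dist_tendsto_zero.1 hz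
          simpa using this.const_mul α
      have h2 : Tendsto (fun n => T^[n + 1] x₀) atTop (𝓝 z) :=
        hz.comp (tendsto_add_atTop_nat 1)
      exact tendsto_nhds_unique h1 h2
  -- convergence of all orbits to z
  have hconv : ∀ x : X, Tendsto (fun n => T^[n] x) atTop (𝓝 z) := by
    intro x
    obtain ⟨-, u, hxu, hzu⟩ := hbounds x z
    have hizu : ∀ n, T^[n] z = z := fun n => Function.iterate_fixed hTz n
    have hu_to_z : Tendsto (fun n => T^[n] u) atTop (𝓝 z) := by
      rw [tendsto_iff_dist_tendsto_zero]
      apply squeeze_zero (fun n => dist_nonneg) (g := fun n => α ^ n * dist z u)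
      · intro n
        have := (hpair z u hzu n).2
        rwa [hizu n, dist_comm] at this
      · exact hgeo _
    rw [tendsto_iff_dist_tendsto_zero]
    apply squeeze_zero (fun n => dist_nonneg)
      (g := fun n => α ^ n * dist x u + dist (T^[n] u) z)
    · intro n
      calc dist (T^[n] x) z ≤ dist (T^[n] x) (T^[n] u) + dist (T^[n] u) z :=
            dist_triangle _ _ _
        _ ≤ α ^ n * dist x u + dist (T^[n] u) z := by
            exact add_le_add (hpair x u hxu n).2 le_rfl
    · have h2 : Tendsto (fun n => dist (T^[n] u) z) atTop (𝓝 0) :=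
        tendsto_iff_dist_tendsto_zero.1 hu_to_z
      simpa using (hgeo (dist x u)).add h2
  refine ⟨z, hTz, ?_, hconv⟩
  intro w hw
  have : Tendsto (fun n : ℕ => T^[n] w) atTop (𝓝 z) := hconv w
  have hconst : (fun n : ℕ => T^[n] w) = fun _ => w := by
    funext n; exact Function.iterate_fixed hw n
  rw [hconst] at this
  exact (tendsto_nhds_unique this tendsto_const_nhds).symm
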